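/- For every integer k ≥ 0 and every real ξ > 0 with ξ ≥ k·x₀, one has K^{k}𝟏(ξ) = (C_β/(C_β+C_δ))^{k}. -/

import Mathlib

open MeasureTheory

/-- Birth rate in the allometric setting with `β = α−1`: `b(x) = C_β x^{α−1}` for
`x > x₀` and `0` otherwise. -/
noncomputable def birthRate (x₀ Cβ α : ℝ) (x : ℝ) : ℝ :=
  if x₀ < x then Cβ * x ^ (α - 1) else 0

/-- Death rate `d(x) = C_δ x^{α−1}`. -/
noncomputable def deathRate (Cδ α : ℝ) (x : ℝ) : ℝ := Cδ * x ^ (α - 1)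

/-- Net energy gain `g(x) = C_R x^α`. -/
noncomputable def energyGain (CR α : ℝ) (x : ℝ) : ℝ := CR * x ^ α

/-- The operator `K`:
`K f(ξ) = ∫_ξ^∞ (b(x)/g(x)) exp(−∫_ξ^x (b+d)/g) f(x−x₀) dx`. -/
noncomputable def Kop (x₀ Cβ Cδ CR α : ℝ) (f : ℝ → ℝ) (ξ : ℝ) : ℝ :=
  ∫ x in Set.Ioi ξ,
    birthRate x₀ Cβ α x / energyGain CR α x *
      Real.exp
        (-(∫ τ in ξ..x,
            (birthRate x₀ Cβ α τ + deathRate Cδ α τ) / energyGain CR α τ)) *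
      f (x - x₀)

lemma Kop_const_aux (α x₀ Cβ Cδ CR : ℝ)
    (hx₀ : 0 < x₀) (hCβ : 0 < Cβ) (hCδ : 0 < Cδ) (hCR : 0 < CR)
    (ξ : ℝ) (hξ0 : 0 < ξ) (hξ : x₀ ≤ ξ) (f : ℝ → ℝ) (c' : ℝ)
    (hf : ∀ x ∈ Set.Ioi ξ, f (x - x₀) = c') :
    Kop x₀ Cβ Cδ CR α f ξ = c' * (Cβ / (Cβ + Cδ)) := by
  set p : ℝ := (Cβ + Cδ) / CR with hp
  have hp0 : 0 < p := div_pos (by linarith) hCR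
  -- inner integral
  have hinner : ∀ x : ℝ, ξ < x →
      (∫ τ in ξ..x,
          (birthRate x₀ Cβ α τ + deathRate Cδ α τ) / energyGain CR α τ)
        = p * Real.log (x / ξ) := by
    intro x hx
    rw [intervalIntegral.integral_of_le hx.le]
    rw [setIntegral_congr_fun measurableSet_Ioc
      (g := fun τ : ℝ => p * τ⁻¹) ?_]
    · rw [MeasureTheory.integral_const_mul, ← intervalIntegral.integral_of_le hx.le,
        integral_inv_of_pos hξ0 (hξ0.trans hx)]
    · intro τ hτ
      have hτ0 : 0 < τ := hξ0.trans hτ.1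
      have hτx₀ : x₀ < τ := lt_of_le_of_lt hξ hτ.1
      have hτα : (0:ℝ) < τ ^ α := Real.rpow_pos_of_pos hτ0 α
      simp only [birthRate, deathRate, energyGain, if_pos hτx₀]
      rw [Real.rpow_sub hτ0, Real.rpow_one]
      rw [hp]
      field_simp
  -- pointwise equality of the integrand
  have hpt : Set.EqOn
      (fun x : ℝ => birthRate x₀ Cβ α x / energyGain CR α x *
        Real.exp (-(∫ τ in ξ..x,
            (birthRate x₀ Cβ α τ + deathRate Cδ α τ) / energyGain CR α τ)) *
        f (x - x₀))
      (fun x : ℝ => (c' * (Cβ / CR) * ξ ^ p) * x ^ (-1 - p)) (Set.Ioi ξ) := by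
    intro x hx
    have hx' : ξ < x := hx
    have hx0 : 0 < x := hξ0.trans hx'
    have hxx₀ : x₀ < x := lt_of_le_of_lt hξ hx'
    have hxα : (0:ℝ) < x ^ α := Real.rpow_pos_of_pos hx0 α
    simp only
    rw [hinner x hx', hf x hx]
    have hdiv : 0 < x / ξ := div_pos hx0 hξ0
    have hexp : Real.exp (-(p * Real.log (x / ξ))) = (x / ξ) ^ (-p) := by
      rw [Real.rpow_def_of_pos hdiv]; ring_nf
    rw [hexp, Real.div_rpow hx0.le hξ0.le, Real.rpow_neg hξ0.le, div_inv_eq_mul]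
    have hbd : birthRate x₀ Cβ α x / energyGain CR α x = Cβ / CR * x⁻¹ := by
      simp only [birthRate, energyGain, if_pos hxx₀]
      rw [Real.rpow_sub hx0, Real.rpow_one]
      field_simp [hCR.ne']
    rw [hbd]
    have hxm : x⁻¹ * x ^ (-p) = x ^ (-1 - p) := by
      rw [← Real.rpow_neg_one x, ← Real.rpow_add hx0]
      ring_nf
    calc Cβ / CR * x⁻¹ * (x ^ (-p) * ξ ^ p) * c'
        = (c' * (Cβ / CR) * ξ ^ p) * (x⁻¹ * x ^ (-p)) := by ring
      _ = (c' * (Cβ / CR) * ξ ^ p) * x ^ (-1 - p) := by rw [hxm]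
  rw [Kop, setIntegral_congr_fun measurableSet_Ioi hpt,
    MeasureTheory.integral_const_mul, integral_Ioi_rpow_of_lt (by linarith) hξ0]
  have h1 : (-1 - p) + 1 = -p := by ring
  have hξp : ξ ^ p ≠ 0 := (Real.rpow_pos_of_pos hξ0 p).ne'
  have hCRp : CR * p = Cβ + Cδ := by
    rw [hp]; field_simp
  rw [h1, Real.rpow_neg hξ0.le, neg_div_neg_eq]
  have h3 : ξ ^ p * ((ξ ^ p)⁻¹ / p) = p⁻¹ := by
    rw [mul_div_assoc', mul_inv_cancel₀ hξp, one_div]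
  have h4 : Cβ / CR * p⁻¹ = Cβ / (Cβ + Cδ) := by
    rw [← div_eq_mul_inv, div_div, hCRp]
  rw [mul_assoc, h3, mul_assoc, h4]

/-- Lemma 6.16: for every `k ≥ 0` and every `ξ > 0` with `ξ ≥ k x₀`,
`K^k 𝟏(ξ) = (C_β/(C_β+C_δ))^k`. -/
theorem stmt10 (α x₀ Cβ Cδ CR : ℝ)
    (hα0 : 0 < α) (hα1 : α ≤ 1) (hx₀ : 0 < x₀)
    (hCβ : 0 < Cβ) (hCδ : 0 < Cδ) (hCR : 0 < CR) :
    ∀ k : ℕ, ∀ ξ : ℝ, 0 < ξ → (k : ℝ) * x₀ ≤ ξ →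
      (Kop x₀ Cβ Cδ CR α)^[k] (fun _ => 1) ξ = (Cβ / (Cβ + Cδ)) ^ k := by
  intro k
  induction k with
  | zero => intro ξ _ _; simp
  | succ k ih =>
    intro ξ hξ0 hkξ
    have hk1 : ((k:ℝ) + 1) * x₀ ≤ ξ := by push_cast at hkξ; linarith
    have hξx₀ : x₀ ≤ ξ := by nlinarith [Nat.cast_nonneg (α := ℝ) k]
    rw [Function.iterate_succ_apply']
    rw [Kop_const_aux α x₀ Cβ Cδ CR hx₀ hCβ hCδ hCR ξ hξ0 hξx₀ _
      ((Cβ / (Cβ + Cδ)) ^ k) ?_]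
    · ring
    · intro x hx
      have hx' : ξ < x := hx
      apply ih
      · nlinarith [Nat.cast_nonneg (α := ℝ) k]
      · nlinarith
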